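/- Let G=(W,E) be a finite simple graph with W nonempty and let k be a natural number. Construct the parliamentary election whose running parties are p_1 and c_2, with spoiler parties S = {s_w : w ∈ W} available for addition, and with four voters per vertex w ∈ W: one voter ranking p_1 ≻ c_2 ≻ (all remaining parties in some fixed order); one voter ranking c_2 ≻ p_1 ≻ (all remaining parties); and two voters ranking the parties {s_u : u ∈ N[w]} first (in some fixed order), then c_2, then p_1, then all remaining parties. Let the coalition be C = {p_1, c_2}, with favored party p_1 and no electoral threshold. Then G has a dominating set of size at most k if and only if there exists a set S⁺ ⊆ S with |S⁺| ≤ k such that, in the election whose running parties are {p_1, c_2} ∪ S⁺, the vote fraction of {p_1, c_2} is at least 1/2 and the vote fraction of {p_1} is at least one half of the vote fraction of {p_1, c_2}. -/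
import Mathlib


open scoped Classical

section Defs

variable {U V : Type*}

/-- `p` is the most-preferred member of the running set `P` under the linear order `L`
(greater means more preferred). -/
def TopOf (L : LinearOrder U) (P : Finset U) (p : U) : Prop :=
  p ∈ P ∧ ∀ q ∈ P, q ≠ p → L.lt q p

/-- Number of voters whose most-preferred running party lies in `A`. -/
noncomputable def votes [Fintype V] (pref : V → LinearOrder U) (P A : Finset U) : ℕ :=
  (Finset.univ.filter fun v : V => ∃ p ∈ A, TopOf (pref v) P p).card

/-- Fraction of voters whose most-preferred running party lies in `A`. -/
noncomputable def voteFrac [Fintype V] (pref : V → LinearOrder U) (P A : Finset U) : ℚ :=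
  (votes pref P A : ℚ) / (Fintype.card V : ℚ)

/-- Total number of votes received by active parties (receiving at least `T` votes) among `A`. -/
noncomputable def activeVotes [Fintype V] (pref : V → LinearOrder U) (P : Finset U) (T : ℕ)
    (A : Finset U) : ℕ :=
  ∑ p ∈ A, if T ≤ votes pref P {p} then votes pref P {p} else 0

/-- Active-vote fraction of `A`. -/
noncomputable def activeFrac [Fintype V] (pref : V → LinearOrder U) (P : Finset U) (T : ℕ)
    (A : Finset U) : ℚ :=
  (activeVotes pref P T A : ℚ) / (activeVotes pref P T P : ℚ)

/-- The linear order `L` respects the tier function `t` (smaller tier = more preferred). -/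
def PrefTiers (L : LinearOrder U) (t : U → ℕ) : Prop :=
  ∀ a b : U, t a < t b → L.lt b a

/-- Pairs `(p, q)` with `p ≻ q` under `L` and `q ≻ p` under `L'`. -/
noncomputable def invPairs [Fintype U] (L L' : LinearOrder U) : Finset (U × U) :=
  Finset.univ.filter fun pq : U × U => L.lt pq.2 pq.1 ∧ L'.lt pq.1 pq.2

/-- Swap-bribery cost of replacing `L` by `L'` with swap-price function `sw`. -/
noncomputable def swapCost [Fintype U] (L L' : LinearOrder U) (sw : U → U → ℝ) : ℝ :=
  ∑ pq ∈ invPairs L L', sw pq.1 pq.2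

end Defs


section Aux

variable {U : Type*}

lemma topOf_unique (L : LinearOrder U) (P : Finset U) {p q : U}
    (hp : TopOf L P p) (hq : TopOf L P q) : p = q := by
  letI := L
  by_contra h
  exact lt_irrefl p ((hq.2 p hp.1 h).trans (hp.2 q hq.1 (Ne.symm h)))

lemma topOf_of_tiers (L : LinearOrder U) (t : U → ℕ) (ht : PrefTiers L t) (P : Finset U)
    (p : U) (hp : p ∈ P) (hmin : ∀ q ∈ P, q ≠ p → t p < t q) : TopOf L P p :=
  ⟨hp, fun q hq hne => ht p q (hmin q hq hne)⟩

lemma exists_top (L : LinearOrder U) (S : Finset U) (hS : S.Nonempty) :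
    ∃ m ∈ S, ∀ x ∈ S, x ≠ m → L.lt x m := by
  letI := L
  exact ⟨S.max' hS, S.max'_mem hS, fun x hx hne => lt_of_le_of_ne (S.le_max' x hx) hne⟩

end Aux

section Voters

set_option linter.unusedSectionVars false

variable {W : Type*} [Fintype W] [DecidableEq W]

lemma voteA (L : LinearOrder (W ⊕ Fin 2))
    (hL : PrefTiers L (Sum.elim (fun _ => (2 : ℕ)) (fun j : Fin 2 => if j = 0 then 0 else 1)))
    (Sp : Finset (W ⊕ Fin 2)) (A : Finset (W ⊕ Fin 2)) :
    (∃ p ∈ A, TopOf L (({Sum.inr 0, Sum.inr 1} : Finset (W ⊕ Fin 2)) ∪ Sp) p) ↔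
      Sum.inr 0 ∈ A := by
  have htop : TopOf L (({Sum.inr 0, Sum.inr 1} : Finset (W ⊕ Fin 2)) ∪ Sp) (Sum.inr 0) := by
    refine topOf_of_tiers L _ hL _ _ (by simp) ?_
    rintro (u | j) _ hne
    · simp
    · fin_cases j <;> simp_all
  constructor
  · rintro ⟨p, hpA, hp⟩
    rwa [topOf_unique L _ hp htop] at hpA
  · exact fun h => ⟨_, h, htop⟩

lemma voteB (L : LinearOrder (W ⊕ Fin 2))
    (hL : PrefTiers L (Sum.elim (fun _ => (2 : ℕ)) (fun j : Fin 2 => if j = 1 then 0 else 1)))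
    (Sp : Finset (W ⊕ Fin 2)) (A : Finset (W ⊕ Fin 2)) :
    (∃ p ∈ A, TopOf L (({Sum.inr 0, Sum.inr 1} : Finset (W ⊕ Fin 2)) ∪ Sp) p) ↔
      Sum.inr 1 ∈ A := by
  have htop : TopOf L (({Sum.inr 0, Sum.inr 1} : Finset (W ⊕ Fin 2)) ∪ Sp) (Sum.inr 1) := by
    refine topOf_of_tiers L _ hL _ _ (by simp) ?_
    rintro (u | j) _ hne
    · simp
    · fin_cases j <;> simp_all
  constructor
  · rintro ⟨p, hpA, hp⟩
    rwa [topOf_unique L _ hp htop] at hpA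
  · exact fun h => ⟨_, h, htop⟩

lemma voteC (G : SimpleGraph W) [DecidableRel G.Adj] (w : W) (L : LinearOrder (W ⊕ Fin 2))
    (hL : PrefTiers L (Sum.elim (fun u => if u = w ∨ G.Adj w u then (0 : ℕ) else 3)
      (fun j : Fin 2 => if j = 1 then 1 else 2)))
    (Sp : Finset (W ⊕ Fin 2)) (hSp : Sp ⊆ Finset.univ.image Sum.inl)
    (A : Finset (W ⊕ Fin 2)) (hA : ∀ u : W, Sum.inl u ∉ A) :
    (∃ p ∈ A, TopOf L (({Sum.inr 0, Sum.inr 1} : Finset (W ⊕ Fin 2)) ∪ Sp) p) ↔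
      ((¬ ∃ u, Sum.inl u ∈ Sp ∧ (u = w ∨ G.Adj w u)) ∧ Sum.inr 1 ∈ A) := by
  set t : W ⊕ Fin 2 → ℕ := Sum.elim (fun u => if u = w ∨ G.Adj w u then (0 : ℕ) else 3)
      (fun j : Fin 2 => if j = 1 then 1 else 2) with ht
  set P : Finset (W ⊕ Fin 2) := ({Sum.inr 0, Sum.inr 1} : Finset (W ⊕ Fin 2)) ∪ Sp with hP
  by_cases hdom : ∃ u, Sum.inl u ∈ Sp ∧ (u = w ∨ G.Adj w u)
  · obtain ⟨u, hu, hadj⟩ := hdom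
    have huS : Sum.inl u ∈ P.filter (fun x => t x = 0) := by
      simp [hP, ht, hu, hadj]
    obtain ⟨m, hmS, hmax⟩ := exists_top L _ ⟨_, huS⟩
    have htm : t m = 0 := (Finset.mem_filter.mp hmS).2
    have htopm : TopOf L P m := by
      refine ⟨(Finset.mem_filter.mp hmS).1, fun q hq hne => ?_⟩
      by_cases htq : t q = 0
      · exact hmax q (Finset.mem_filter.mpr ⟨hq, htq⟩) hne
      · exact hL m q (by omega)
    have hmA : m ∉ A := by
      rcases m with u' | j
      · exact hA u'
      · exfalso
        fin_cases j <;> simp [ht] at htm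
    constructor
    · rintro ⟨p, hpA, hp⟩
      rw [topOf_unique L _ hp htopm] at hpA
      exact absurd hpA hmA
    · rintro ⟨h, -⟩
      exact absurd ⟨u, hu, hadj⟩ h
  · have htop : TopOf L P (Sum.inr 1) := by
      refine topOf_of_tiers L _ hL _ _ (by simp [hP]) ?_
      rintro (u | j) hq hne
      · have huSp : Sum.inl u ∈ Sp := by
          rcases Finset.mem_union.mp hq with h | h
          · simp at h
          · exact h
        have : ¬ (u = w ∨ G.Adj w u) := fun h => hdom ⟨u, huSp, h⟩
        simp [ht, this]
      · fin_cases j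
        · simp [ht]
        · exact absurd (rfl : (Sum.inr 1 : W ⊕ Fin 2) = Sum.inr 1) (by simpa using hne)
    constructor
    · rintro ⟨p, hpA, hp⟩
      rw [topOf_unique L _ hp htop] at hpA
      exact ⟨hdom, hpA⟩
    · rintro ⟨-, h⟩
      exact ⟨_, h, htop⟩

end Voters

section Counting

variable {W : Type*} [Fintype W] [DecidableEq W]

lemma conds_iff [Nonempty W] (G : SimpleGraph W) [DecidableRel G.Adj]
    (pref : W × Fin 4 → LinearOrder (W ⊕ Fin 2))
    (hpref : ∀ (w : W) (i : Fin 4), PrefTiers (pref (w, i))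
      (if i = 0 then
        Sum.elim (fun _ => (2 : ℕ)) (fun j : Fin 2 => if j = 0 then 0 else 1)
      else if i = 1 then
        Sum.elim (fun _ => (2 : ℕ)) (fun j : Fin 2 => if j = 1 then 0 else 1)
      else
        Sum.elim (fun u => if u = w ∨ G.Adj w u then (0 : ℕ) else 3)
          (fun j : Fin 2 => if j = 1 then 1 else 2)))
    (Sp : Finset (W ⊕ Fin 2)) (hSp : Sp ⊆ Finset.univ.image Sum.inl) :
    ((1 : ℚ) / 2 ≤ voteFrac pref ({Sum.inr 0, Sum.inr 1} ∪ Sp) {Sum.inr 0, Sum.inr 1} ∧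
      (1 : ℚ) / 2 * voteFrac pref ({Sum.inr 0, Sum.inr 1} ∪ Sp) {Sum.inr 0, Sum.inr 1} ≤
        voteFrac pref ({Sum.inr 0, Sum.inr 1} ∪ Sp) {Sum.inr 0}) ↔
      ∀ w : W, ∃ u, Sum.inl u ∈ Sp ∧ (u = w ∨ G.Adj w u) := by
  have h0 : ∀ w : W, PrefTiers (pref (w, 0))
      (Sum.elim (fun _ => (2 : ℕ)) (fun j : Fin 2 => if j = 0 then 0 else 1)) := by
    intro w
    have := hpref w 0
    rwa [if_pos rfl] at this
  have h1 : ∀ w : W, PrefTiers (pref (w, 1))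
      (Sum.elim (fun _ => (2 : ℕ)) (fun j : Fin 2 => if j = 1 then 0 else 1)) := by
    intro w
    have := hpref w 1
    rwa [if_neg (by decide), if_pos rfl] at this
  have h2 : ∀ (w : W) (i : Fin 4), i = 2 ∨ i = 3 → PrefTiers (pref (w, i))
      (Sum.elim (fun u => if u = w ∨ G.Adj w u then (0 : ℕ) else 3)
        (fun j : Fin 2 => if j = 1 then 1 else 2)) := by
    intro w i hi
    have := hpref w i
    rcases hi with rfl | rfl
    · rwa [if_neg (by decide), if_neg (by decide)] at this
    · rwa [if_neg (by decide), if_neg (by decide)] at this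
  set D : Finset W := Finset.univ.filter
    (fun w : W => ¬ ∃ u, Sum.inl u ∈ Sp ∧ (u = w ∨ G.Adj w u)) with hD
  set n := Fintype.card W with hn
  -- votes for {p1}
  have hv1 : votes pref ({Sum.inr 0, Sum.inr 1} ∪ Sp) {Sum.inr 0} = n := by
    have hset : votes pref ({Sum.inr 0, Sum.inr 1} ∪ Sp) {Sum.inr 0} =
        ((Finset.univ : Finset W) ×ˢ ({0} : Finset (Fin 4))).card := by
      unfold votes
      congr 1
      ext ⟨w, i⟩
      rw [Finset.mem_filter]
      simp only [Finset.mem_univ, true_and]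
      fin_cases i
      · refine (voteA (pref (w, 0)) (h0 w) Sp {Sum.inr 0}).trans ?_
        simp
      · refine (voteB (pref (w, 1)) (h1 w) Sp {Sum.inr 0}).trans ?_
        simp
      · refine (voteC G w (pref (w, 2)) (h2 w 2 (Or.inl rfl)) Sp hSp {Sum.inr 0}
          (by simp)).trans ?_
        simp
      · refine (voteC G w (pref (w, 3)) (h2 w 3 (Or.inr rfl)) Sp hSp {Sum.inr 0}
          (by simp)).trans ?_
        simp
    rw [hset, Finset.card_product]
    simp [hn]
  -- votes for {p1, c2}
  have hv2 : votes pref ({Sum.inr 0, Sum.inr 1} ∪ Sp) {Sum.inr 0, Sum.inr 1}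
      = 2 * n + 2 * D.card := by
    have hset : votes pref ({Sum.inr 0, Sum.inr 1} ∪ Sp) {Sum.inr 0, Sum.inr 1} =
        (((Finset.univ : Finset W) ×ˢ ({0, 1} : Finset (Fin 4))) ∪ (D ×ˢ ({2, 3} : Finset (Fin 4)))).card := by
      unfold votes
      congr 1
      ext ⟨w, i⟩
      rw [Finset.mem_filter]
      simp only [Finset.mem_univ, true_and]
      fin_cases i
      · refine (voteA (pref (w, 0)) (h0 w) Sp {Sum.inr 0, Sum.inr 1}).trans ?_
        simp
      · refine (voteB (pref (w, 1)) (h1 w) Sp {Sum.inr 0, Sum.inr 1}).trans ?_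
        simp
      · refine (voteC G w (pref (w, 2)) (h2 w 2 (Or.inl rfl)) Sp hSp {Sum.inr 0, Sum.inr 1}
          (by simp)).trans ?_
        simp [hD, Finset.mem_filter, Finset.mem_product]
      · refine (voteC G w (pref (w, 3)) (h2 w 3 (Or.inr rfl)) Sp hSp {Sum.inr 0, Sum.inr 1}
          (by simp)).trans ?_
        simp [hD, Finset.mem_filter, Finset.mem_product]
    rw [hset, Finset.card_union_of_disjoint, Finset.card_product, Finset.card_product]
    · simp [hn, mul_comm]
    · rw [Finset.disjoint_left]
      rintro ⟨w, i⟩ hi hj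
      rw [Finset.mem_product] at hi hj
      fin_cases i <;> simp_all
  have hcV : (Fintype.card (W × Fin 4) : ℚ) = 4 * n := by
    rw [Fintype.card_prod, Fintype.card_fin]
    push_cast [hn]
    ring
  have hn1 : 0 < n := Fintype.card_pos
  have hnq : (0 : ℚ) < n := by exact_mod_cast hn1
  have h4 : (0 : ℚ) < 4 * n := by positivity
  have hf1 : voteFrac pref ({Sum.inr 0, Sum.inr 1} ∪ Sp) {Sum.inr 0, Sum.inr 1}
      = (2 * n + 2 * D.card : ℚ) / (4 * n) := by
    unfold voteFrac
    rw [hv2, hcV]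
    push_cast
    ring_nf
  have hf2 : voteFrac pref ({Sum.inr 0, Sum.inr 1} ∪ Sp) {Sum.inr 0}
      = (n : ℚ) / (4 * n) := by
    unfold voteFrac
    rw [hv1, hcV]
  constructor
  · rintro ⟨-, hle⟩ w
    by_contra hw
    have hwD : w ∈ D := by
      rw [hD, Finset.mem_filter]
      exact ⟨Finset.mem_univ w, hw⟩
    have hm1 : 1 ≤ D.card := Finset.card_pos.mpr ⟨w, hwD⟩
    have hm1q : (1 : ℚ) ≤ D.card := by exact_mod_cast hm1
    rw [hf1, hf2, ← mul_div_assoc, div_le_div_iff₀ h4 h4] at hle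
    nlinarith
  · intro hdom
    have hm0 : D.card = 0 := by
      rw [Finset.card_eq_zero, hD, Finset.filter_eq_empty_iff]
      exact fun w _ => not_not.mpr (hdom w)
    rw [hf1, hf2, hm0]
    constructor
    · rw [le_div_iff₀ h4]
      push_cast
      nlinarith
    · rw [← mul_div_assoc, div_le_div_iff₀ h4 h4]
      push_cast
      nlinarith

end Counting

/-- Election (adding opposition parties, J+F objective, no threshold):
running parties $p_1$ (= `Sum.inr 0`) and $c_2$ (= `Sum.inr 1`); spoilers
$s_w$ (= `Sum.inl w`).  Per vertex $w$: one voter ranks $p_1 ≻ c_2 ≻$ rest, one ranks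
$c_2 ≻ p_1 ≻$ rest, and two rank $\{s_u : u ∈ N[w]\}$ first, then $c_2$, then $p_1$, then
the rest.  The coalition is $\{p_1, c_2\}$ with favored party $p_1$.  Then $G$ has a
dominating set of size at most $k$ iff at most $k$ spoilers can be added so that the
coalition's vote fraction is at least $1/2$ and $p_1$'s vote fraction is at least half of
the coalition's. -/
theorem aop_JF_dominating_set_reduction
    {W : Type*} [Fintype W] [DecidableEq W] [Nonempty W]
    (G : SimpleGraph W) [DecidableRel G.Adj] (k : ℕ)
    (pref : W × Fin 4 → LinearOrder (W ⊕ Fin 2))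
    (hpref : ∀ (w : W) (i : Fin 4), PrefTiers (pref (w, i))
      (if i = 0 then
        Sum.elim (fun _ => (2 : ℕ)) (fun j : Fin 2 => if j = 0 then 0 else 1)
      else if i = 1 then
        Sum.elim (fun _ => (2 : ℕ)) (fun j : Fin 2 => if j = 1 then 0 else 1)
      else
        Sum.elim (fun u => if u = w ∨ G.Adj w u then (0 : ℕ) else 3)
          (fun j : Fin 2 => if j = 1 then 1 else 2))) :
    (∃ W' : Finset W, W'.card ≤ k ∧ ∀ w : W, ∃ u ∈ W', u = w ∨ G.Adj u w) ↔
    (∃ Sp : Finset (W ⊕ Fin 2), Sp ⊆ Finset.univ.image Sum.inl ∧ Sp.card ≤ k ∧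
      (1 : ℚ) / 2 ≤ voteFrac pref ({Sum.inr 0, Sum.inr 1} ∪ Sp) {Sum.inr 0, Sum.inr 1} ∧
      (1 : ℚ) / 2 * voteFrac pref ({Sum.inr 0, Sum.inr 1} ∪ Sp) {Sum.inr 0, Sum.inr 1} ≤
        voteFrac pref ({Sum.inr 0, Sum.inr 1} ∪ Sp) {Sum.inr 0}) := by
  constructor
  · rintro ⟨W', hWk, hWdom⟩
    have hSp : W'.image (Sum.inl : W → W ⊕ Fin 2) ⊆ Finset.univ.image Sum.inl :=
      Finset.image_subset_image (Finset.subset_univ W')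
    have hdom : ∀ w : W, ∃ u, Sum.inl u ∈ W'.image (Sum.inl : W → W ⊕ Fin 2) ∧ (u = w ∨ G.Adj w u) := by
      intro w
      obtain ⟨u, hu, hc⟩ := hWdom w
      exact ⟨u, Finset.mem_image_of_mem _ hu, hc.imp id fun h => h.symm⟩
    have h := (conds_iff G pref hpref _ hSp).mpr hdom
    exact ⟨W'.image Sum.inl, hSp,
      by rwa [Finset.card_image_of_injective _ Sum.inl_injective], h.1, h.2⟩
  · rintro ⟨Sp, hSp, hk, hc1, hc2⟩
    have hdom := (conds_iff G pref hpref Sp hSp).mp ⟨hc1, hc2⟩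
    refine ⟨Finset.univ.filter (fun u => Sum.inl u ∈ Sp), ?_, ?_⟩
    · refine le_trans (Finset.card_le_card_of_injOn Sum.inl ?_ ?_) hk
      · intro u hu
        exact (Finset.mem_filter.mp hu).2
      · exact fun a _ b _ h => Sum.inl_injective h
    · intro w
      obtain ⟨u, hu, hc⟩ := hdom w
      exact ⟨u, Finset.mem_filter.mpr ⟨Finset.mem_univ u, hu⟩, hc.imp id fun h => h.symm⟩
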